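/- arXiv:2010.02989 — 6 statements merged into one kernel-verified Lean document; each statement's English description precedes it below -/
import Mathlib

section
/- Every finite simple graph G on a finite vertex type V with a weight function w : V → ℝ satisfying w v ≥ 0 for all v has an independent set S whose total weight satisfies ∑_{v ∈ S} w v ≥ ∑_{u ∈ V} w u / (deg(u) + 1), where deg(u) is the degree of u in G. (This is the guaranteed weight of the greedy GWMIN algorithm for the Maximum Weight Independent Set problem.) -/
/-- An independent set of `G`: no two distinct vertices are adjacent. -/
def IsIndep {V : Type*} (G : SimpleGraph V) (P : Finset V) : Prop :=
  ∀ u ∈ P, ∀ v ∈ P, u ≠ v → ¬ G.Adj u v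

private lemma gwmin_aux {V : Type*} [Fintype V] [DecidableEq V] (G : SimpleGraph V)
    [DecidableRel G.Adj] (w : V → ℝ) (hw : ∀ v, 0 ≤ w v) :
    ∀ n : ℕ, ∀ A : Finset V, A.card ≤ n →
      ∃ S : Finset V, S ⊆ A ∧ IsIndep G S ∧
        ∑ u ∈ A, w u / ((A.filter (G.Adj u)).card + 1) ≤ ∑ v ∈ S, w v := by
  intro n
  induction n with
  | zero =>
    intro A hA
    have : A = ∅ := Finset.card_eq_zero.mp (Nat.le_zero.mp hA)
    subst this
    exact ⟨∅, by simp, by intro u hu; simp at hu, by simp⟩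
  | succ n ih =>
    intro A hA
    rcases A.eq_empty_or_nonempty with rfl | hne
    · exact ⟨∅, by simp, by intro u hu; simp at hu, by simp⟩
    set f : V → ℝ := fun u => w u / ((A.filter (G.Adj u)).card + 1) with hf
    obtain ⟨v, hvA, hmax⟩ := A.exists_max_image f hne
    set N : Finset V := insert v (A.filter (G.Adj v)) with hN
    set A' : Finset V := A \ N with hA'
    have hNsub : N ⊆ A := by
      intro x hx
      rcases Finset.mem_insert.mp hx with rfl | hx
      · exact hvA
      · exact (Finset.mem_filter.mp hx).1
    have hvN : v ∈ N := Finset.mem_insert_self _ _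
    have hA'sub : A' ⊆ A := Finset.sdiff_subset
    have hvA' : v ∉ A' := fun h => (Finset.mem_sdiff.mp h).2 hvN
    have hcard : A'.card ≤ n := by
      have : A'.card < A.card :=
        Finset.card_lt_card (Finset.ssubset_iff_of_subset hA'sub |>.mpr ⟨v, hvA, hvA'⟩)
      omega
    obtain ⟨S', hS'sub, hS'ind, hS'w⟩ := ih A' hcard
    refine ⟨insert v S', ?_, ?_, ?_⟩
    · intro x hx
      rcases Finset.mem_insert.mp hx with rfl | hx
      · exact hvA
      · exact hA'sub (hS'sub hx)
    · intro a ha b hb hab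
      have hnotadj : ∀ x ∈ S', ¬ G.Adj v x := by
        intro x hx hadj
        have hxA' : x ∈ A' := hS'sub hx
        have : x ∈ N := Finset.mem_insert_of_mem (Finset.mem_filter.mpr ⟨hA'sub hxA', hadj⟩)
        exact (Finset.mem_sdiff.mp hxA').2 this
      intro hadj
      rcases Finset.mem_insert.mp ha with ha1 | ha1 <;>
        rcases Finset.mem_insert.mp hb with hb1 | hb1
      · exact hab (ha1.trans hb1.symm)
      · exact hnotadj b hb1 (by rwa [ha1] at hadj)
      · exact hnotadj a ha1 (by rw [hb1] at hadj; exact hadj.symm)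
      · exact hS'ind a ha1 b hb1 hab hadj
    · -- weight bound
      have hsplit : ∑ u ∈ A, f u = ∑ u ∈ N, f u + ∑ u ∈ A', f u := by
        rw [hA', Finset.sum_sdiff_eq_sub hNsub]; ring
      have hNcard : (N.card : ℝ) = (A.filter (G.Adj v)).card + 1 := by
        rw [hN, Finset.card_insert_of_notMem (by simp [G.irrefl])]
        push_cast; ring
      have hfv_nonneg : 0 ≤ f v := div_nonneg (hw v) (by positivity)
      have h1 : ∑ u ∈ N, f u ≤ w v := by
        calc ∑ u ∈ N, f u ≤ ∑ _u ∈ N, f v :=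
              Finset.sum_le_sum (fun u hu => hmax u (hNsub hu))
          _ = N.card * f v := by rw [Finset.sum_const, nsmul_eq_mul]
          _ = w v := by
              rw [hNcard, hf]
              field_simp
      have h2 : ∑ u ∈ A', f u ≤ ∑ u ∈ A', w u / ((A'.filter (G.Adj u)).card + 1) := by
        apply Finset.sum_le_sum
        intro u hu
        have hmono : (A'.filter (G.Adj u)).card ≤ (A.filter (G.Adj u)).card :=
          Finset.card_le_card (Finset.filter_subset_filter _ hA'sub)
        have : ((A'.filter (G.Adj u)).card : ℝ) + 1 ≤ ((A.filter (G.Adj u)).card : ℝ) + 1 := by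
          exact_mod_cast Nat.add_le_add_right hmono 1
        exact div_le_div_of_nonneg_left (hw u) (by positivity) this
      calc ∑ u ∈ A, f u = ∑ u ∈ N, f u + ∑ u ∈ A', f u := hsplit
        _ ≤ w v + ∑ x ∈ S', w x := add_le_add h1 (h2.trans hS'w)
        _ = ∑ x ∈ insert v S', w x :=
            (Finset.sum_insert (fun h => hvA' (hS'sub h))).symm

/-- Guaranteed weight of the GWMIN greedy algorithm: every finite weighted graph with
nonnegative weights has an independent set of total weight at least
`∑ u, w u / (deg u + 1)`. -/
theorem stmt_2 {V : Type*} [Fintype V] [DecidableEq V] (G : SimpleGraph V)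
    [DecidableRel G.Adj] (w : V → ℝ) (hw : ∀ v, 0 ≤ w v) :
    ∃ S : Finset V, IsIndep G S ∧
      ∑ u : V, w u / (G.degree u + 1) ≤ ∑ v ∈ S, w v := by
  obtain ⟨S, _, hind, hsum⟩ :=
    gwmin_aux G w hw (Finset.univ.card) Finset.univ (le_refl _)
  refine ⟨S, hind, ?_⟩
  have hdeg : ∀ u : V, (Finset.univ.filter (G.Adj u)).card = G.degree u := by
    intro u
    rw [SimpleGraph.degree]
    congr 1
    ext x
    simp [SimpleGraph.mem_neighborFinset]
  calc ∑ u : V, w u / (G.degree u + 1)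
      = ∑ u ∈ Finset.univ, w u / ((Finset.univ.filter (G.Adj u)).card + 1) := by
        apply Finset.sum_congr rfl; intro u _; rw [hdeg]
    _ ≤ ∑ v ∈ S, w v := hsum
end

section
/- Let G be a finite simple graph on a finite vertex type V with a weight function w : V → ℝ such that w v > 0 for all v. If a vertex v is conflict-ridden, i.e., Score_max(v) < ∑_{u ∈ V} w u / (deg(u) + 1), then v does not belong to any maximum weight independent set of G: for every independent set P of G with v ∈ P there exists an independent set S of G with Score(P) < Score(S). -/
/-- The score of a sharing plan. -/
def Score {V : Type*} (w : V → ℝ) (P : Finset V) : ℝ := ∑ v ∈ P, w v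

/-- `Score_max v`: the sum of the weights of all vertices that are not neighbors of `v`. -/
def ScoreMax {V : Type*} [Fintype V] [DecidableEq V] (G : SimpleGraph V)
    [DecidableRel G.Adj] (w : V → ℝ) (v : V) : ℝ :=
  ∑ u ∈ Finset.univ \ G.neighborFinset v, w u

/-- Weighted Caro–Wei / GWMIN bound, by strong induction on the vertex set. -/
lemma caro_wei {V : Type*} [Fintype V] [DecidableEq V] (G : SimpleGraph V)
    [DecidableRel G.Adj] (w : V → ℝ) (hw : ∀ v, 0 < w v) :
    ∀ n : ℕ, ∀ A : Finset V, A.card ≤ n →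
      ∃ S : Finset V, S ⊆ A ∧ IsIndep G S ∧
        (∑ u ∈ A, w u / ((A ∩ G.neighborFinset u).card + 1)) ≤ Score w S := by
  intro n
  induction n with
  | zero =>
    intro A hA
    have : A = ∅ := Finset.card_eq_zero.mp (Nat.le_zero.mp hA)
    subst this
    exact ⟨∅, Finset.Subset.refl _, fun u hu => absurd hu (Finset.notMem_empty u),
      by simp [Score]⟩
  | succ n ih =>
    intro A hA
    rcases A.eq_empty_or_nonempty with rfl | hne
    · exact ⟨∅, Finset.Subset.refl _, fun u hu => absurd hu (Finset.notMem_empty u),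
        by simp [Score]⟩
    · -- pick v maximizing w u / (d_A u + 1)
      obtain ⟨v, hvA, hvmax⟩ := Finset.exists_max_image A
        (fun u => w u / ((A ∩ G.neighborFinset u).card + 1)) hne
      set f : V → ℝ := fun u => w u / ((A ∩ G.neighborFinset u).card + 1) with hf
      set B : Finset V := A \ insert v (G.neighborFinset v) with hB
      have hBA : B ⊆ A := Finset.sdiff_subset
      have hvB : v ∉ B := by simp [hB]
      have hBcard : B.card ≤ n := by
        have h1 : B.card < A.card :=
          Finset.card_lt_card (Finset.ssubset_iff_of_subset hBA |>.mpr ⟨v, hvA, hvB⟩)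
        omega
      obtain ⟨S', hS'B, hS'indep, hS'score⟩ := ih B hBcard
      have hvS' : v ∉ S' := fun h => hvB (hS'B h)
      refine ⟨insert v S', ?_, ?_, ?_⟩
      · intro u hu
        rcases Finset.mem_insert.mp hu with rfl | hu
        · exact hvA
        · exact hBA (hS'B hu)
      · intro a ha b hb hab hadj
        have hnadj : ∀ x ∈ S', ¬ G.Adj v x := by
          intro x hx hadj
          have := hS'B hx
          rw [hB, Finset.mem_sdiff] at this
          exact this.2 (Finset.mem_insert_of_mem (G.mem_neighborFinset v x |>.mpr hadj))
        rcases Finset.mem_insert.mp ha with ha' | ha' <;>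
          rcases Finset.mem_insert.mp hb with hb' | hb'
        · exact hab (ha'.trans hb'.symm)
        · subst ha'; exact hnadj b hb' hadj
        · subst hb'; exact hnadj a ha' (G.adj_symm hadj)
        · exact hS'indep a ha' b hb' hab hadj
      · -- score bound
        have hsplit : A = (A ∩ insert v (G.neighborFinset v)) ∪ B := by
          rw [hB, Finset.union_comm]; exact (Finset.sdiff_union_inter A _).symm
        have hdisj : Disjoint (A ∩ insert v (G.neighborFinset v)) B := by
          rw [hB]
          exact Finset.disjoint_sdiff.mono_left Finset.inter_subset_right
        have hsum : (∑ u ∈ A, f u)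
            = (∑ u ∈ A ∩ insert v (G.neighborFinset v), f u) + ∑ u ∈ B, f u := by
          conv_lhs => rw [hsplit]
          exact Finset.sum_union hdisj
        -- closed neighborhood part ≤ w v
        have hcardN : (A ∩ insert v (G.neighborFinset v)).card
            = (A ∩ G.neighborFinset v).card + 1 := by
          have : A ∩ insert v (G.neighborFinset v) = insert v (A ∩ G.neighborFinset v) := by
            ext x
            simp only [Finset.mem_inter, Finset.mem_insert]
            constructor
            · rintro ⟨hx, rfl | hx'⟩
              · exact Or.inl rfl
              · exact Or.inr ⟨hx, hx'⟩
            · rintro (rfl | ⟨hx, hx'⟩)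
              · exact ⟨hvA, Or.inl rfl⟩
              · exact ⟨hx, Or.inr hx'⟩
          rw [this, Finset.card_insert_of_notMem]
          simp [G.notMem_neighborFinset_self v]
        have hpos : (0:ℝ) < (A ∩ G.neighborFinset v).card + 1 := Nat.cast_add_one_pos _
        have hN : (∑ u ∈ A ∩ insert v (G.neighborFinset v), f u) ≤ w v := by
          calc (∑ u ∈ A ∩ insert v (G.neighborFinset v), f u)
              ≤ ∑ _u ∈ A ∩ insert v (G.neighborFinset v), f v := by
                apply Finset.sum_le_sum
                intro u hu
                exact hvmax u (Finset.mem_of_mem_inter_left hu)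
            _ = ((A ∩ G.neighborFinset v).card + 1) * f v := by
                rw [Finset.sum_const, hcardN]; ring
            _ = w v := by
                show ((A ∩ G.neighborFinset v).card + 1 : ℝ) * (w v / ((A ∩ G.neighborFinset v).card + 1)) = w v
                rw [mul_comm]; exact div_mul_cancel₀ (w v) hpos.ne'
        -- B part: f u ≤ f_B u
        have hBpart : (∑ u ∈ B, f u)
            ≤ ∑ u ∈ B, w u / ((B ∩ G.neighborFinset u).card + 1) := by
          apply Finset.sum_le_sum
          intro u hu
          apply div_le_div_of_nonneg_left (hw u).le
          · exact Nat.cast_add_one_pos _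
          · have : (B ∩ G.neighborFinset u).card ≤ (A ∩ G.neighborFinset u).card :=
              Finset.card_le_card (Finset.inter_subset_inter_right hBA)
            exact_mod_cast Nat.add_le_add_right this 1
        have hScore : Score w (insert v S') = w v + Score w S' := by
          rw [Score, Finset.sum_insert hvS']; rfl
        rw [hScore, hsum]
        have := hBpart.trans hS'score
        linarith

/-- A conflict-ridden candidate (one with `Score_max(v)` below the guaranteed GWMIN
weight) does not belong to any maximum weight independent set of `G`. -/
theorem stmt_3 {V : Type*} [Fintype V] [DecidableEq V] (G : SimpleGraph V)
    [DecidableRel G.Adj] (w : V → ℝ) (hw : ∀ v, 0 < w v) (v : V)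
    (hcr : ScoreMax G w v < ∑ u : V, w u / (G.degree u + 1)) :
    ∀ P : Finset V, IsIndep G P → v ∈ P →
      ∃ S : Finset V, IsIndep G S ∧ Score w P < Score w S := by
  intro P hP hvP
  obtain ⟨S, _, hSindep, hSscore⟩ :=
    caro_wei G w hw (Finset.univ.card) Finset.univ le_rfl
  have hdeg : ∀ u : V, (Finset.univ ∩ G.neighborFinset u).card = G.degree u := by
    intro u; rw [Finset.univ_inter]; rfl
  have hSscore' : (∑ u : V, w u / (G.degree u + 1)) ≤ Score w S := by
    refine le_trans (le_of_eq ?_) hSscore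
    apply Finset.sum_congr rfl
    intro u _
    rw [hdeg u]
  have hPsub : P ⊆ Finset.univ \ G.neighborFinset v := by
    intro u hu
    rw [Finset.mem_sdiff]
    refine ⟨Finset.mem_univ u, fun hadj => ?_⟩
    rw [G.mem_neighborFinset] at hadj
    by_cases h : u = v
    · subst h; exact G.irrefl hadj
    · exact hP v hvP u hu (Ne.symm h) hadj
  have hPle : Score w P ≤ ScoreMax G w v := by
    apply Finset.sum_le_sum_of_subset_of_nonneg hPsub
    intro u _ _; exact (hw u).le
  exact ⟨S, hSindep, lt_of_le_of_lt hPle (lt_of_lt_of_le hcr hSscore')⟩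
end

section
/- Let G be a finite simple graph on a vertex type V, let P be a finite set of vertices with |P| > 2, and let P₁ and P₂ be two distinct independent sets of G that are both parents of P (i.e., P₁, P₂ ⊂ P and |P₁| = |P₂| = |P| − 1, with P = P₁ ∪ P₂). Let v₁ be the unique element of P₁ \ P₂ and v₂ the unique element of P₂ \ P₁. If v₁ and v₂ are not adjacent in G, then P is an independent set of G. -/
/-- If two distinct valid parents `P₁, P₂` of `P` (with `P = P₁ ∪ P₂`) differ exactly in
`v₁` and `v₂`, and `v₁` and `v₂` are not adjacent, then `P` is valid. -/
theorem stmt_8 {V : Type*} [DecidableEq V] (G : SimpleGraph V) (P P₁ P₂ : Finset V)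
    (hcard : 2 < P.card) (hne : P₁ ≠ P₂)
    (h₁ : IsIndep G P₁) (h₂ : IsIndep G P₂)
    (hsub₁ : P₁ ⊂ P) (hsub₂ : P₂ ⊂ P)
    (hc₁ : P₁.card = P.card - 1) (hc₂ : P₂.card = P.card - 1)
    (hunion : P = P₁ ∪ P₂)
    (v₁ v₂ : V) (hv₁ : P₁ \ P₂ = {v₁}) (hv₂ : P₂ \ P₁ = {v₂})
    (hadj : ¬ G.Adj v₁ v₂) :
    IsIndep G P := by
  intro u hu v hv huv hA
  rw [hunion, Finset.mem_union] at hu hv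
  have key : ∀ a b : V, a ∈ P₁ → b ∈ P₂ → a ≠ b → ¬ G.Adj a b := by
    intro a b ha hb hab hab'
    by_cases h1 : b ∈ P₁
    · exact h₁ a ha b h1 hab hab'
    · have hb2 : b ∈ P₂ \ P₁ := Finset.mem_sdiff.mpr ⟨hb, h1⟩
      rw [hv₂, Finset.mem_singleton] at hb2
      by_cases h2 : a ∈ P₂
      · exact h₂ a h2 b hb hab hab'
      · have ha1 : a ∈ P₁ \ P₂ := Finset.mem_sdiff.mpr ⟨ha, h2⟩
        rw [hv₁, Finset.mem_singleton] at ha1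
        subst ha1; subst hb2
        exact hadj hab'
  rcases hu with hu | hu <;> rcases hv with hv | hv
  · exact h₁ u hu v hv huv hA
  · exact key u v hu hv huv hA
  · exact key v u hv hu huv.symm hA.symm
  · exact h₂ u hu v hv huv hA
end

section
/- Let Event be a type with a map type : Event → τ for a type τ of event types with decidable equality. For every pattern p : List τ, event type E : τ, stream l : List Event, and event e : Event, the match count satisfies the incremental recurrence matchCount (p ++ [E]) (l ++ [e]) = matchCount (p ++ [E]) l + (if type e = E then matchCount p l else 0). (This is the correctness of online event sequence aggregation: the count of a prefix pattern of length j is updated from its previous value and the count of the prefix of length j − 1.) -/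
/-- `matchCount type p l` is the number of matches of the pattern `p` in the stream `l`,
i.e. the number of sublists (subsequences) of `l` whose list of event types equals `p`. -/
def matchCount {Event τ : Type*} [DecidableEq τ] (type : Event → τ)
    (p : List τ) (l : List Event) : ℕ :=
  (l.sublists.filter (fun s => s.map type = p)).length

/-- Correctness of online event sequence aggregation: the count of a pattern of length
`j` is updated incrementally from its previous value and the count of the prefix of
length `j − 1`. -/
theorem stmt_11 {Event τ : Type*} [DecidableEq τ] (type : Event → τ)
    (p : List τ) (E : τ) (l : List Event) (e : Event) :
    matchCount type (p ++ [E]) (l ++ [e]) =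
      matchCount type (p ++ [E]) l +
        (if type e = E then matchCount type p l else 0) := by
  unfold matchCount
  rw [List.sublists_concat, List.filter_append, List.length_append]
  congr 1
  rw [List.filter_map, List.length_map]
  by_cases h : type e = E
  · simp only [h, if_true]
    have hc : ∀ s ∈ l.sublists, ((fun s => decide (List.map type s = p ++ [E])) ∘ fun x => x ++ [e]) s = decide (List.map type s = p) := fun s hs => ?_
    · rw [List.filter_congr hc]
    simp only [Function.comp, List.map_append, List.map_cons, List.map_nil, h, decide_eq_decide,
      List.append_left_inj]
  · simp only [h, if_false]
    rw [List.length_eq_zero_iff]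
    rw [List.filter_eq_nil_iff]
    intro s hs
    simp [Function.comp]
    intro hcon
    exact h
end

section
/- Let Event be a type with a map type : Event → τ for a type τ of event types with decidable equality. For all patterns s, t : List τ with t nonempty, and every stream l : List Event, matchCount (s ++ t) l = ∑_{i=0}^{|l|−1} (if type (l.get i) = t.head then matchCount s (l.take i) * matchCount t.tail (l.drop (i+1)) else 0). (This is the correctness of the Shared method's count combination step: the count of the concatenated pattern is obtained by combining, per START event of t, the count of the prefix pattern before it with the count of the suffix pattern after it.) -/
lemma sum_ite_one {α : Type*} (c : α → Prop) [DecidablePred c] (L : List α) :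
    (L.map (fun x => if c x then 1 else 0)).sum = (L.filter (fun x => decide (c x))).length := by
  induction L with
  | nil => simp
  | cons a L ih => by_cases h : c a <;> simp [List.filter_cons, h, ih, Nat.add_comm]

lemma mc_split {Event τ : Type*} [DecidableEq τ] (type : Event → τ)
    (p : List τ) (a : Event) (l : List Event) :
    matchCount type p (a :: l) = matchCount type p l +
      (l.sublists.map (fun x => if type a :: List.map type x = p then 1 else 0)).sum := by
  simp only [matchCount, List.sublists_cons, List.bind_eq_flatMap, List.filter_flatMap,
    List.length_flatMap]
  have key : (List.length ∘ fun x => List.filter (fun s => decide (List.map type s = p)) [x, a :: x])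
      = fun x => (if List.map type x = p then 1 else 0) + (if type a :: List.map type x = p then 1 else 0) := by
    funext x
    simp [List.filter_cons]
    split_ifs <;> simp_all
  rw [show (fun x => (List.filter (fun s => decide (List.map type s = p)) [x, a :: x]).length) = _ from key,
    List.sum_map_add, sum_ite_one]

lemma mc_cons_nil {Event τ : Type*} [DecidableEq τ] (type : Event → τ)
    (a : Event) (l : List Event) :
    matchCount type [] (a :: l) = matchCount type [] l := by
  rw [mc_split]; simp

lemma mc_cons_cons {Event τ : Type*} [DecidableEq τ] (type : Event → τ)
    (h : τ) (tl : List τ) (a : Event) (l : List Event) :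
    matchCount type (h :: tl) (a :: l) = matchCount type (h :: tl) l +
      (if type a = h then matchCount type tl l else 0) := by
  rw [mc_split]
  congr 1
  by_cases hh : type a = h
  · subst hh
    rw [if_pos rfl, matchCount, ← sum_ite_one (fun x => List.map type x = tl)]
    apply congrArg
    apply List.map_congr_left
    intro x _
    by_cases hx : List.map type x = tl <;> simp [hx]
  · rw [if_neg hh]
    simp [hh]

lemma mc_nil {Event τ : Type*} [DecidableEq τ] (type : Event → τ) (p : List τ) :
    matchCount type p [] = if p = [] then 1 else 0 := by
  cases p <;> simp [matchCount]

lemma mc_nil_pat {Event τ : Type*} [DecidableEq τ] (type : Event → τ) (l : List Event) :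
    matchCount type [] l = 1 := by
  induction l with
  | nil => simp [matchCount]
  | cons a l ih => rw [mc_cons_nil, ih]

/-- Correctness of the Shared method's count-combination step: the count of the
concatenated pattern `s ++ t` is obtained by combining, per START event of `t`, the
count of `s` before it with the count of `t.tail` after it. -/
theorem stmt_12 {Event τ : Type*} [DecidableEq τ] (type : Event → τ)
    (s t : List τ) (ht : t ≠ []) (l : List Event) :
    matchCount type (s ++ t) l =
      ∑ i : Fin l.length,
        if type (l.get i) = t.head ht then
          matchCount type s (l.take i) * matchCount type t.tail (l.drop (i + 1))
        else 0 := by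
  obtain ⟨th, tt, rfl⟩ : ∃ th tt, t = th :: tt := by
    cases t with
    | nil => exact absurd rfl ht
    | cons a b => exact ⟨a, b, rfl⟩
  simp only [List.head_cons, List.tail_cons]
  induction l generalizing s with
  | nil =>
    cases s <;> simp [mc_nil]
  | cons a l ih =>
    simp only [List.get_eq_getElem] at ih
    simp only [List.length_cons]
    rw [Fin.sum_univ_succ]
    simp only [Fin.val_zero, Fin.val_succ, List.get_eq_getElem, List.getElem_cons_zero,
      List.getElem_cons_succ, List.take_zero, List.take_succ_cons, List.drop_succ_cons,
      List.drop_zero]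
    cases s with
    | nil =>
      rw [List.nil_append, mc_cons_cons]
      have h0 : ∀ j : Fin l.length,
          (if type l[(j:ℕ)] = th then
            matchCount type [] (a :: l.take (j:ℕ)) * matchCount type tt (l.drop ((j:ℕ) + 1))
          else 0) =
          (if type l[(j:ℕ)] = th then
            matchCount type [] (l.take (j:ℕ)) * matchCount type tt (l.drop ((j:ℕ) + 1))
          else 0) := by
        intro j; rw [mc_nil_pat, mc_nil_pat]
      rw [Finset.sum_congr rfl (fun j _ => h0 j)]; erw [← ih []]
      rw [mc_nil]
      simp only [List.nil_append]
      split_ifs <;> omega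
    | cons h s' =>
      rw [List.cons_append, mc_cons_cons, mc_nil]
      have h0 : ∀ j : Fin l.length,
          (if type l[(j:ℕ)] = th then
            matchCount type (h :: s') (a :: l.take (j:ℕ)) * matchCount type tt (l.drop ((j:ℕ) + 1))
          else 0) =
          ((if type l[(j:ℕ)] = th then
            matchCount type (h :: s') (l.take (j:ℕ)) * matchCount type tt (l.drop ((j:ℕ) + 1))
          else 0) +
          (if type l[(j:ℕ)] = th then
            (if type a = h then matchCount type s' (l.take (j:ℕ)) else 0) *
              matchCount type tt (l.drop ((j:ℕ) + 1))
          else 0)) := by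
        intro j
        rw [mc_cons_cons]
        split_ifs <;> ring
      rw [Finset.sum_congr rfl (fun j _ => h0 j), Finset.sum_add_distrib]; erw [← ih (h :: s')]
      have h1 : ∑ j : Fin l.length,
          (if type l[(j:ℕ)] = th then
            (if type a = h then matchCount type s' (l.take (j:ℕ)) else 0) *
              matchCount type tt (l.drop ((j:ℕ) + 1))
          else 0) = if type a = h then matchCount type (s' ++ th :: tt) l else 0 := by
        by_cases hah : type a = h
        · simp only [if_pos hah]
          exact (ih s').symm
        · simp [hah]
      rw [h1]
      simp only [List.cons_append, List.cons_ne_nil, if_false, Nat.zero_mul, ite_self]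
      split_ifs <;> omega
end

section
/- Let G be a finite simple graph on a finite vertex type V with a weight function w : V → ℝ such that w v > 0 for all v, and let v be a conflict-ridden vertex, i.e., Score_max(v) < ∑_{u ∈ V} w u / (deg(u) + 1). Then removing v does not change the optimum: the maximum of Score(S) over all independent sets S of G equals the maximum of Score(S) over all independent sets S of G with v ∉ S. (Hence conflict-ridden candidates can be pruned from the Sharon graph without sacrificing the optimality of the resulting sharing plan.) -/
lemma caroWei {V : Type*} [Fintype V] [DecidableEq V] (G : SimpleGraph V)
    [DecidableRel G.Adj] (w : V → ℝ) (hw : ∀ v, 0 < w v) (A : Finset V) :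
    ∃ T, T ⊆ A ∧ IsIndep G T ∧
      ∑ x ∈ A, w x / (((A ∩ G.neighborFinset x).card : ℝ) + 1) ≤ ∑ u ∈ T, w u := by
  induction A using Finset.strongInduction with
  | _ A ih =>
    rcases A.eq_empty_or_nonempty with rfl | hA
    · exact ⟨∅, Finset.Subset.refl _, fun u hu => absurd hu (Finset.notMem_empty u), by simp⟩
    obtain ⟨u, huA, hmax⟩ := A.exists_max_image
      (fun x => w x / (((A ∩ G.neighborFinset x).card : ℝ) + 1)) hA
    set C : Finset V := insert u (A ∩ G.neighborFinset u) with hC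
    have hCA : C ⊆ A := by
      intro x hx
      rcases Finset.mem_insert.mp hx with rfl | hx
      · exact huA
      · exact (Finset.mem_inter.mp hx).1
    set B : Finset V := A \ C with hB
    have hBA : B ⊂ A := Finset.sdiff_ssubset hCA ⟨u, Finset.mem_insert_self _ _⟩
    obtain ⟨T, hTB, hTind, hTsum⟩ := ih B hBA
    have huT : u ∉ T := fun h => by
      have := hTB h
      rw [hB, Finset.mem_sdiff] at this
      exact this.2 (Finset.mem_insert_self _ _)
    refine ⟨insert u T, ?_, ?_, ?_⟩
    · intro x hx
      rcases Finset.mem_insert.mp hx with rfl | hx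
      · exact huA
      · exact hBA.1 (hTB hx)
    · -- independence
      intro x hx y hy hxy
      have hadj : ∀ z ∈ T, ¬ G.Adj u z := by
        intro z hz hadj
        have hzB := hTB hz
        rw [hB, Finset.mem_sdiff] at hzB
        exact hzB.2 (Finset.mem_insert_of_mem (Finset.mem_inter.mpr
          ⟨hBA.1 (hTB hz), (G.mem_neighborFinset u z).mpr hadj⟩))
      rcases Finset.mem_insert.mp hx with hx | hx
      · rcases Finset.mem_insert.mp hy with hy | hy
        · exact absurd (hx.trans hy.symm) hxy
        · exact fun h => hadj y hy (hx ▸ h)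
      · rcases Finset.mem_insert.mp hy with hy | hy
        · exact fun h => hadj x hx (G.adj_symm (hy ▸ h))
        · exact hTind x hx y hy hxy
    · -- sum bound
      rw [Finset.sum_insert huT]
      have hsplit : ∑ x ∈ B, w x / (((A ∩ G.neighborFinset x).card : ℝ) + 1)
          + ∑ x ∈ C, w x / (((A ∩ G.neighborFinset x).card : ℝ) + 1)
          = ∑ x ∈ A, w x / (((A ∩ G.neighborFinset x).card : ℝ) + 1) :=
        Finset.sum_sdiff hCA
      have hCcard : (C.card : ℝ) = ((A ∩ G.neighborFinset u).card : ℝ) + 1 := by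
        rw [hC, Finset.card_insert_of_notMem]
        · push_cast; ring
        · intro h
          exact G.notMem_neighborFinset_self u (Finset.mem_inter.mp h).2
      have h1 : ∑ x ∈ C, w x / (((A ∩ G.neighborFinset x).card : ℝ) + 1) ≤ w u := by
        calc ∑ x ∈ C, w x / (((A ∩ G.neighborFinset x).card : ℝ) + 1)
            ≤ ∑ _x ∈ C, w u / (((A ∩ G.neighborFinset u).card : ℝ) + 1) :=
              Finset.sum_le_sum (fun x hx => hmax x (hCA hx))
          _ = (C.card : ℝ) * (w u / (((A ∩ G.neighborFinset u).card : ℝ) + 1)) := by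
              rw [Finset.sum_const, nsmul_eq_mul]
          _ = w u := by
              rw [hCcard]
              field_simp
      have h2 : ∑ x ∈ B, w x / (((A ∩ G.neighborFinset x).card : ℝ) + 1)
          ≤ ∑ x ∈ B, w x / (((B ∩ G.neighborFinset x).card : ℝ) + 1) := by
        apply Finset.sum_le_sum
        intro x hx
        apply div_le_div_of_nonneg_left (hw x).le
        · positivity
        · have : (B ∩ G.neighborFinset x).card ≤ (A ∩ G.neighborFinset x).card :=
            Finset.card_le_card (Finset.inter_subset_inter hBA.1 (Finset.Subset.refl _))
          exact_mod_cast Nat.add_le_add_right this 1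
      linarith


/-- Pruning a conflict-ridden candidate does not change the optimal score: the supremum
of scores over all independent sets equals the supremum over independent sets avoiding
`v`. -/
theorem stmt_13 {V : Type*} [Fintype V] [DecidableEq V] (G : SimpleGraph V)
    [DecidableRel G.Adj] (w : V → ℝ) (hw : ∀ v, 0 < w v) (v : V)
    (hcr : ScoreMax G w v < ∑ u : V, w u / (G.degree u + 1)) :
    sSup {x : ℝ | ∃ S : Finset V, IsIndep G S ∧ Score w S = x} =
      sSup {x : ℝ | ∃ S : Finset V, IsIndep G S ∧ v ∉ S ∧ Score w S = x} := by
  -- Caro–Wei witness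
  obtain ⟨T, -, hTind, hTsum⟩ := caroWei G w hw Finset.univ
  have hTsum' : ∑ u : V, w u / (G.degree u + 1) ≤ Score w T := by
    simp only [Score]
    have : ∀ x : V, (Finset.univ ∩ G.neighborFinset x).card = G.degree x := by
      intro x; rw [Finset.univ_inter]; rfl
    calc ∑ u : V, w u / ((G.degree u : ℝ) + 1)
        = ∑ x : V, w x / (((Finset.univ ∩ G.neighborFinset x).card : ℝ) + 1) := by
          simp only [this]
      _ ≤ ∑ u ∈ T, w u := hTsum
  -- any independent set containing v has score ≤ ScoreMax
  have hmem : ∀ S : Finset V, IsIndep G S → v ∈ S → Score w S ≤ ScoreMax G w v := by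
    intro S hS hvS
    apply Finset.sum_le_sum_of_subset_of_nonneg
    · intro x hxS
      rw [Finset.mem_sdiff]
      refine ⟨Finset.mem_univ x, fun hx => ?_⟩
      rcases eq_or_ne v x with rfl | hne
      · exact G.notMem_neighborFinset_self v hx
      · exact hS v hvS x hxS hne ((G.mem_neighborFinset v x).mp hx)
    · intro x _ _
      exact (hw x).le
  have hvT : v ∉ T := fun h => absurd (lt_of_lt_of_le hcr hTsum') (not_lt.mpr (hmem T hTind h))
  set S1 := {x : ℝ | ∃ S : Finset V, IsIndep G S ∧ Score w S = x} with hS1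
  set S2 := {x : ℝ | ∃ S : Finset V, IsIndep G S ∧ v ∉ S ∧ Score w S = x} with hS2
  have hsub : S2 ⊆ S1 := fun x ⟨S, h1, _, h3⟩ => ⟨S, h1, h3⟩
  have hfin1 : S1.Finite := Set.Finite.subset (Set.finite_range (Score w))
    (fun x ⟨S, _, h⟩ => ⟨S, h⟩)
  have hfin2 : S2.Finite := hfin1.subset hsub
  have hne2 : S2.Nonempty := ⟨0, ∅, fun u hu => absurd hu (Finset.notMem_empty u),
    Finset.notMem_empty v, by simp [Score]⟩
  have hne1 : S1.Nonempty := hne2.mono hsub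
  apply le_antisymm
  · have hmemS1 : sSup S1 ∈ S1 := hne1.csSup_mem hfin1
    obtain ⟨S, hSind, hSsc⟩ := hmemS1
    by_cases hvS : v ∈ S
    · exfalso
      have h1 : Score w S < Score w T :=
        lt_of_le_of_lt (hmem S hSind hvS) (lt_of_lt_of_le hcr hTsum')
      have h2 : Score w T ≤ sSup S1 :=
        le_csSup hfin1.bddAbove ⟨T, hTind, rfl⟩
      linarith [hSsc ▸ h1]
    · calc sSup S1 = Score w S := hSsc.symm
        _ ≤ sSup S2 := le_csSup hfin2.bddAbove ⟨S, hSind, hvS, rfl⟩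
  · exact csSup_le_csSup hfin1.bddAbove hne2 hsub
end
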